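/- For all φ, χ ∈ S(ℝ) and all (x, y) ∈ ℝ², one has (2πi)^{-1} ∫_{ℝ²} e^{i W_L(x,y;x',y')} φ(x') χ(y') dx' dy' = −i (π/2)^{1/2} · W(φ, conj(χ̂))(x/2, y/2), where W_L(x,y;x',y') = −(y x' + x y') + x' y' + (1/2) x y, χ̂ is the Fourier transform of χ, and conj denotes complex conjugation. (This identifies the intertwining operator for the Landau Hamiltonian with a rescaled cross-Wigner transform.) -/

import Mathlib

open MeasureTheory Complex
open scoped ComplexConjugate Real

noncomputable section

/-- The cross-Wigner transform (one dimension):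
`W(φ,ψ)(x,ξ) = (2π)⁻¹ ∫ e^{-iξt} φ(x+t/2) conj(ψ(x−t/2)) dt`. -/
def crossWigner1 (φ ψ : ℝ → ℂ) (x ξ : ℝ) : ℂ :=
  ((2 * π)⁻¹ : ℝ) *
    ∫ t : ℝ, Complex.exp (-(Complex.I * ξ * t)) * φ (x + t / 2) * conj (ψ (x - t / 2))

/-- The Fourier transform `χ̂(ξ) = (2π)^{-1/2} ∫ e^{-iξt} χ(t) dt`. -/
def fourier1 (χ : ℝ → ℂ) (ξ : ℝ) : ℂ :=
  ((Real.sqrt (2 * π))⁻¹ : ℝ) * ∫ t : ℝ, Complex.exp (-(Complex.I * ξ * t)) * χ t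

/-- The generating quadratic form for the Landau intertwiner:
`W_L(x,y;x',y') = −(yx' + xy') + x'y' + xy/2`. -/
def WLandau (x y x' y' : ℝ) : ℝ := -(y * x' + x * y') + x' * y' + x * y / 2

/-- For all Schwartz functions `φ, χ` on `ℝ` and all `(x,y) ∈ ℝ²`,
`(2πi)⁻¹ ∬ e^{iW_L(x,y;x',y')} φ(x')χ(y') dx'dy' = −i (π/2)^{1/2} W(φ, conj χ̂)(x/2, y/2)`:
the intertwining operator for the Landau Hamiltonian is a rescaled cross-Wigner
transform. -/
theorem stmt13 (φ χ : SchwartzMap ℝ ℂ) (x y : ℝ) :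
    (2 * (π : ℂ) * Complex.I)⁻¹ *
        ∫ p : ℝ × ℝ, Complex.exp (Complex.I * (WLandau x y p.1 p.2 : ℝ)) * φ p.1 * χ p.2
      = -Complex.I * (Real.sqrt (π / 2) : ℝ) *
          crossWigner1 φ (fun t => conj (fourier1 χ t)) (x / 2) (y / 2) := by
  have hπ : (0:ℝ) < π := Real.pi_pos
  -- Step 1: integrability on the product and Fubini
  have hint : Integrable
      (fun p : ℝ × ℝ => Complex.exp (Complex.I * (WLandau x y p.1 p.2 : ℝ)) * φ p.1 * χ p.2)
      ((volume : Measure ℝ).prod volume) := by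
    have h1 : Integrable (fun p : ℝ × ℝ => (φ p.1) * (χ p.2)) ((volume : Measure ℝ).prod volume) :=
      (φ.integrable).mul_prod (χ.integrable)
    have h2 := h1.bdd_mul
      (f := fun p : ℝ × ℝ => Complex.exp (Complex.I * (WLandau x y p.1 p.2 : ℝ)))
      ?_ (c := 1) (Filter.Eventually.of_forall fun p => by simp [WLandau, Complex.norm_exp])
    · simpa [mul_assoc] using h2
    · apply Continuous.aestronglyMeasurable
      unfold WLandau; fun_prop
  have hfub : (∫ p : ℝ × ℝ, Complex.exp (Complex.I * (WLandau x y p.1 p.2 : ℝ)) * φ p.1 * χ p.2)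
      = ∫ x' : ℝ, ∫ y' : ℝ, Complex.exp (Complex.I * (WLandau x y x' y' : ℝ)) * φ x' * χ y' :=
    MeasureTheory.integral_prod _ hint
  rw [hfub]
  -- Step 2: compute the inner integral
  have key : (fun x' : ℝ => ∫ y' : ℝ, Complex.exp (Complex.I * (WLandau x y x' y' : ℝ)) * φ x' * χ y')
      = fun x' : ℝ => ((Real.sqrt (2*π) : ℝ) : ℂ) *
          (Complex.exp (Complex.I * ((x*y/2 - y*x' : ℝ) : ℂ)) * φ x' * fourier1 χ (x - x')) := by
    funext x'
    have hpt : (fun y' : ℝ => Complex.exp (Complex.I * (WLandau x y x' y' : ℝ)) * φ x' * χ y')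
        = fun t : ℝ => (Complex.exp (Complex.I * ((x*y/2 - y*x' : ℝ) : ℂ)) * φ x') *
            (Complex.exp (-(Complex.I * ((x - x' : ℝ) : ℂ) * (t : ℂ))) * χ t) := by
      funext t
      have e1 : (Complex.I * ((WLandau x y x' t : ℝ) : ℂ))
          = Complex.I * ((x*y/2 - y*x' : ℝ) : ℂ) + (-(Complex.I * ((x - x' : ℝ) : ℂ) * (t : ℂ))) := by
        simp only [WLandau]; push_cast; ring
      rw [e1, Complex.exp_add]; ring
    rw [hpt, MeasureTheory.integral_const_mul _ _]
    simp only [fourier1]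
    have hs : ((Real.sqrt (2*π) : ℝ) : ℂ) ≠ 0 := by
      simp only [ne_eq, Complex.ofReal_eq_zero]
      positivity
    set J : ℂ := ∫ t : ℝ, Complex.exp (-(Complex.I * ((x - x' : ℝ) : ℂ) * (t : ℂ))) * χ t with hJ
    have h2ne : ((Real.sqrt 2 : ℝ) : ℂ) ≠ 0 := by
      simp only [ne_eq, Complex.ofReal_eq_zero]; positivity
    have hπsne : ((Real.sqrt π : ℝ) : ℂ) ≠ 0 := by
      simp only [ne_eq, Complex.ofReal_eq_zero]
      positivity
    push_cast
    field_simp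
  rw [key]; rw [MeasureTheory.integral_const_mul]
  -- Step 3: rewrite the RHS cross-Wigner transform
  have hcw : crossWigner1 φ (fun t => conj (fourier1 χ t)) (x / 2) (y / 2)
      = ((2 * π)⁻¹ : ℝ) * ∫ t : ℝ, Complex.exp (-(Complex.I * ((y/2 : ℝ) : ℂ) * (t : ℂ))) *
          φ (x/2 + t / 2) * fourier1 χ (x/2 - t / 2) := by
    simp only [crossWigner1, Complex.conj_conj]
  rw [hcw]
  -- Step 4: change of variables t = 2u - x
  have hcv : (∫ t : ℝ, Complex.exp (-(Complex.I * ((y/2 : ℝ) : ℂ) * (t : ℂ))) *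
          φ (x/2 + t / 2) * fourier1 χ (x/2 - t / 2))
      = 2 * ∫ u : ℝ, Complex.exp (Complex.I * ((x*y/2 - y*u : ℝ) : ℂ)) * φ u * fourier1 χ (x - u) := by
    set g : ℝ → ℂ := fun t => Complex.exp (-(Complex.I * ((y/2 : ℝ) : ℂ) * (t : ℂ))) *
          φ (x/2 + t / 2) * fourier1 χ (x/2 - t / 2) with hg
    have h1 : (∫ u : ℝ, g (2*u - x)) = ((|(2:ℝ)⁻¹| : ℝ) : ℂ) * ∫ s : ℝ, g (s - x) := by
      simpa using MeasureTheory.Measure.integral_comp_mul_left (fun s : ℝ => g (s - x)) 2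
    have h2 : (∫ s : ℝ, g (s - x)) = ∫ t : ℝ, g t := integral_sub_right_eq_self g x
    have h3 : (fun u : ℝ => g (2*u - x))
        = fun u : ℝ => Complex.exp (Complex.I * ((x*y/2 - y*u : ℝ) : ℂ)) * φ u * fourier1 χ (x - u) := by
      funext u
      have a1 : x/2 + (2*u - x)/2 = u := by ring
      have a2 : x/2 - (2*u - x)/2 = x - u := by ring
      have a3 : -(Complex.I * ((y/2 : ℝ) : ℂ) * ((2*u - x : ℝ) : ℂ))
          = Complex.I * ((x*y/2 - y*u : ℝ) : ℂ) := by push_cast; ring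
      simp only [hg, a1, a2, a3]
    rw [← h2, ← h3, h1, show ((|(2:ℝ)⁻¹| : ℝ) : ℂ) = 2⁻¹ by rw [show |(2:ℝ)⁻¹| = 2⁻¹ from by norm_num]; norm_num]
    ring
  rw [hcv]
  -- Step 5: constants
  set S : ℂ := ∫ u : ℝ, Complex.exp (Complex.I * ((x*y/2 - y*u : ℝ) : ℂ)) * φ u * fourier1 χ (x - u)
  have hc : (2*(π:ℂ)*Complex.I)⁻¹ * ((Real.sqrt (2*π) : ℝ) : ℂ)
      = -Complex.I * ((Real.sqrt (π/2) : ℝ) : ℂ) * (((2*π)⁻¹ : ℝ) : ℂ) * 2 := by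
    have h2s : Real.sqrt (2*π) = Real.sqrt 2 * Real.sqrt π := Real.sqrt_mul (by norm_num) π
    have h3s : Real.sqrt (π/2) = Real.sqrt π / Real.sqrt 2 := Real.sqrt_div hπ.le 2
    have ha : ((Real.sqrt 2 : ℝ) : ℂ) * ((Real.sqrt 2 : ℝ) : ℂ) = 2 := by
      rw [← Complex.ofReal_mul, Real.mul_self_sqrt (by norm_num)]
      norm_num
    have hane : ((Real.sqrt 2 : ℝ) : ℂ) ≠ 0 := by
      simp only [ne_eq, Complex.ofReal_eq_zero]; positivity
    have hπne : ((π : ℝ) : ℂ) ≠ 0 := by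
      simp only [ne_eq, Complex.ofReal_eq_zero]; exact hπ.ne'
    have hII : Complex.I * Complex.I = -1 := Complex.I_mul_I
    rw [h2s, h3s]
    push_cast
    field_simp
    linear_combination ha + 2 * hII
  linear_combination S * hc
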